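/- Suppose R ≥ R_a, d₁ ≥ 0 and d₃ ≥ 0 are such that the pair (L, φ) with L = d₁ + R·Ω + d₃ and φ(s) = min(max((s − d₁)/R, 0), Ω) (the concatenation of a line segment of length d₁, a circular arc of radius R and angle Ω, and a line segment of length d₃) is admissible. Then R = R_a, d₁ = 0 and d₃ = D; that is, the only admissible concatenation of two line segments and one circular arc of radius at least R_a is the arc-then-segment curve (L₀, φ₀). -/

import Mathlib

open Real

/-- `φ` is `K`-Lipschitz on `[0, L]`. -/
def LipOn (φ : ℝ → ℝ) (L K : ℝ) : Prop :=
  ∀ s ∈ Set.Icc (0:ℝ) L, ∀ t ∈ Set.Icc (0:ℝ) L, |φ s - φ t| ≤ K * |s - t|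

/-- The maximal curvature of the curve `(L, φ)`: the least Lipschitz constant of `φ`
(essential supremum of `φ'`) on `[0, L]`. -/
noncomputable def maxCurv (φ : ℝ → ℝ) (L : ℝ) : ℝ :=
  sInf {K : ℝ | 0 ≤ K ∧ LipOn φ L K}

/-- An admissible curve for the data `(Ω, b₁, b₂)` : a pair `(L, φ)` with `L > 0`,
`φ` nondecreasing and Lipschitz on `[0, L]`, `φ 0 = 0`, `φ L = Ω`,
`∫₀^L cos (φ s) ds = b₁` and `∫₀^L sin (φ s) ds = b₂`. -/
def Admissible (Ω b₁ b₂ L : ℝ) (φ : ℝ → ℝ) : Prop :=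
  0 < L ∧ MonotoneOn φ (Set.Icc 0 L) ∧ (∃ K : ℝ, 0 ≤ K ∧ LipOn φ L K) ∧
  φ 0 = 0 ∧ φ L = Ω ∧
  (∫ s in (0:ℝ)..L, Real.cos (φ s)) = b₁ ∧
  (∫ s in (0:ℝ)..L, Real.sin (φ s)) = b₂

/-- First coordinate of the associated plane curve. -/
noncomputable def xcoord (φ : ℝ → ℝ) (s : ℝ) : ℝ := ∫ t in (0:ℝ)..s, Real.cos (φ t)

/-- Second coordinate of the associated plane curve. -/
noncomputable def ycoord (φ : ℝ → ℝ) (s : ℝ) : ℝ := ∫ t in (0:ℝ)..s, Real.sin (φ t)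

/-- The only admissible concatenation segment–arc–segment with arc radius `R ≥ R_a`
is the arc-then-segment curve itself: `R = R_a`, `d₁ = 0` and `d₃ = D`. -/
theorem stmt12 (Ω R_a D b₁ b₂ R d₁ d₃ : ℝ)
    (hΩ : Ω ∈ Set.Ioo 0 Real.pi) (hRa : 0 < R_a) (hD : 0 ≤ D)
    (hb₁ : b₁ = R_a * Real.sin Ω + D * Real.cos Ω)
    (hb₂ : b₂ = R_a * (1 - Real.cos Ω) + D * Real.sin Ω)
    (hR : R_a ≤ R) (hd₁ : 0 ≤ d₁) (hd₃ : 0 ≤ d₃)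
    (h : Admissible Ω b₁ b₂ (d₁ + R * Ω + d₃)
      (fun s => min (max ((s - d₁) / R) 0) Ω)) :
    R = R_a ∧ d₁ = 0 ∧ d₃ = D := by
  obtain ⟨hΩ0, hΩπ⟩ := hΩ
  have hRpos : 0 < R := lt_of_lt_of_le hRa hR
  have hsin : 0 < Real.sin Ω := Real.sin_pos_of_pos_of_lt_pi hΩ0 hΩπ
  have hpyth := Real.sin_sq_add_cos_sq Ω
  have hcos : Real.cos Ω < 1 := by nlinarith
  set φ : ℝ → ℝ := fun s => min (max ((s - d₁) / R) 0) Ω with hφ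
  have hφcont : Continuous φ := by
    apply Continuous.min _ continuous_const
    exact Continuous.max (by fun_prop) continuous_const
  have hab : d₁ ≤ d₁ + R * Ω := by nlinarith
  have hbL : d₁ + R * Ω ≤ d₁ + R * Ω + d₃ := by linarith
  -- equal functions on pieces
  have e1 : ∀ g : ℝ → ℝ, Set.EqOn (fun s => g (φ s)) (fun _ => g 0) (Set.uIcc 0 d₁) := by
    intro g s hs
    rw [Set.uIcc_of_le hd₁] at hs
    have h1 : (s - d₁) / R ≤ 0 := div_nonpos_iff.mpr (Or.inr ⟨by linarith [hs.2], hRpos.le⟩)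
    simp only [hφ, max_eq_right h1, min_eq_left hΩ0.le]
  have e2 : ∀ g : ℝ → ℝ, Set.EqOn (fun s => g (φ s)) (fun s => g ((s - d₁) / R))
      (Set.uIcc d₁ (d₁ + R * Ω)) := by
    intro g s hs
    rw [Set.uIcc_of_le hab] at hs
    have h1 : 0 ≤ (s - d₁) / R := div_nonneg (by linarith [hs.1]) hRpos.le
    have h2 : (s - d₁) / R ≤ Ω := by
      rw [div_le_iff₀ hRpos]
      nlinarith [hs.2]
    simp only [hφ, max_eq_left h1, min_eq_left h2]
  have e3 : ∀ g : ℝ → ℝ, Set.EqOn (fun s => g (φ s)) (fun _ => g Ω)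
      (Set.uIcc (d₁ + R * Ω) (d₁ + R * Ω + d₃)) := by
    intro g s hs
    rw [Set.uIcc_of_le hbL] at hs
    have h2 : Ω ≤ (s - d₁) / R := (le_div_iff₀ hRpos).mpr (by nlinarith [hs.1])
    simp only [hφ, max_eq_left (le_trans hΩ0.le h2), min_eq_right h2]
  -- splitting lemma for any continuous g
  have splitInt : ∀ g : ℝ → ℝ, Continuous g →
      (∫ s in (0:ℝ)..(d₁ + R * Ω + d₃), g (φ s))
        = (∫ s in (0:ℝ)..d₁, g (φ s)) + (∫ s in d₁..(d₁ + R * Ω), g (φ s))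
          + (∫ s in (d₁ + R * Ω)..(d₁ + R * Ω + d₃), g (φ s)) := by
    intro g hg
    have hI : ∀ u v : ℝ, IntervalIntegrable (fun s => g (φ s)) MeasureTheory.volume u v :=
      fun u v => (hg.comp hφcont).intervalIntegrable u v
    rw [intervalIntegral.integral_add_adjacent_intervals (hI 0 d₁) (hI d₁ (d₁ + R * Ω)),
      intervalIntegral.integral_add_adjacent_intervals (hI 0 (d₁ + R * Ω))
        (hI (d₁ + R * Ω) (d₁ + R * Ω + d₃))]
  have hdiv : (d₁ + R * Ω - d₁) / R = Ω := by
    field_simp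
    ring
  have hderiv : ∀ s : ℝ, HasDerivAt (fun s => (s - d₁) / R) (1 / R) s := by
    intro s
    simpa using ((hasDerivAt_id s).sub_const d₁).div_const R
  -- cosine equation
  have Ecos : d₁ + R * Real.sin Ω + d₃ * Real.cos Ω = R_a * Real.sin Ω + D * Real.cos Ω := by
    have hb := h.2.2.2.2.2.1
    rw [splitInt Real.cos Real.continuous_cos] at hb
    rw [intervalIntegral.integral_congr (e1 Real.cos),
        intervalIntegral.integral_congr (e2 Real.cos),
        intervalIntegral.integral_congr (e3 Real.cos)] at hb
    have p2 : (∫ s in d₁..(d₁ + R * Ω), Real.cos ((s - d₁) / R))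
        = R * Real.sin Ω := by
      have : ∀ s ∈ Set.uIcc d₁ (d₁ + R * Ω),
          HasDerivAt (fun s => R * Real.sin ((s - d₁) / R)) (Real.cos ((s - d₁) / R)) s := by
        intro s _
        have := ((Real.hasDerivAt_sin ((s - d₁) / R)).comp s (hderiv s)).const_mul R
        refine this.congr_deriv ?_
        field_simp
      rw [intervalIntegral.integral_eq_sub_of_hasDerivAt this
        ((Real.continuous_cos.comp (by fun_prop)).intervalIntegrable _ _)]
      show R * Real.sin ((d₁ + R * Ω - d₁) / R) - R * Real.sin ((d₁ - d₁) / R) = R * Real.sin Ω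
      rw [hdiv]
      simp
    rw [p2] at hb
    simp only [intervalIntegral.integral_const, smul_eq_mul, Real.cos_zero, mul_one] at hb
    rw [hb₁] at hb
    linear_combination hb
  -- sine equation
  have Esin : R * (1 - Real.cos Ω) + d₃ * Real.sin Ω
      = R_a * (1 - Real.cos Ω) + D * Real.sin Ω := by
    have hb := h.2.2.2.2.2.2
    rw [splitInt Real.sin Real.continuous_sin] at hb
    rw [intervalIntegral.integral_congr (e1 Real.sin),
        intervalIntegral.integral_congr (e2 Real.sin),
        intervalIntegral.integral_congr (e3 Real.sin)] at hb
    have p2 : (∫ s in d₁..(d₁ + R * Ω), Real.sin ((s - d₁) / R))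
        = R * (1 - Real.cos Ω) := by
      have : ∀ s ∈ Set.uIcc d₁ (d₁ + R * Ω),
          HasDerivAt (fun s => -(R * Real.cos ((s - d₁) / R))) (Real.sin ((s - d₁) / R)) s := by
        intro s _
        have := (((Real.hasDerivAt_cos ((s - d₁) / R)).comp s (hderiv s)).const_mul R).neg
        refine this.congr_deriv ?_
        field_simp
      rw [intervalIntegral.integral_eq_sub_of_hasDerivAt this
        ((Real.continuous_sin.comp (by fun_prop)).intervalIntegrable _ _)]
      show -(R * Real.cos ((d₁ + R * Ω - d₁) / R)) - -(R * Real.cos ((d₁ - d₁) / R))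
          = R * (1 - Real.cos Ω)
      rw [hdiv]
      simp
      ring
    rw [p2] at hb
    simp only [intervalIntegral.integral_const, smul_eq_mul, Real.sin_zero, mul_zero] at hb
    rw [hb₂] at hb
    linear_combination hb
  -- algebra
  have hkey : d₁ * Real.sin Ω + (R - R_a) * (1 - Real.cos Ω) = 0 := by
    linear_combination Real.sin Ω * Ecos - Real.cos Ω * Esin - (R - R_a) * hpyth
  have t1 : 0 ≤ d₁ * Real.sin Ω := mul_nonneg hd₁ hsin.le
  have t2 : 0 ≤ (R - R_a) * (1 - Real.cos Ω) := mul_nonneg (by linarith) (by linarith)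
  have hRR : R = R_a := by nlinarith
  have hd10 : d₁ = 0 := by nlinarith
  refine ⟨hRR, hd10, ?_⟩
  have : d₃ * Real.sin Ω = D * Real.sin Ω := by
    rw [hRR] at Esin; linarith
  exact mul_right_cancel₀ hsin.ne' this
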